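/- Hölder's inequality for 𝓛^p(𝓧): if 1 ≤ p,q ≤ ∞ with 1/p + 1/q = 1 and F,G : 𝓧 → ℝ, then ‖FG‖_{𝓛¹(𝓧)} ≤ ‖F‖_{𝓛^p(𝓧)} · ‖G‖_{𝓛^q(𝓧)}. -/

import Mathlib

open MeasureTheory Set Filter
open scoped ENNReal Classical

variable {X : Type*} [MetricSpace X] [MeasurableSpace X]

/-- Total mass of a measure, as a real number. -/
noncomputable def mass (ν : Measure X) : ℝ := (ν Set.univ).toReal

/-- The support of a measure. -/
def msupp (ν : Measure X) : Set X := {x : X | ∀ ε : ℝ, 0 < ε → 0 < ν (Metric.ball x ε)}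

/-- The set `𝓜` of measures dominated by `μ` with compact support. -/
def MM (μ : Measure X) : Set (Measure X) := {ν | ν ≤ μ ∧ IsCompact (msupp ν)}

/-- Gauge function `h` used in the definition of the mass transport metric. -/
def IsGauge (h : ℝ → ℝ) : Prop :=
  StrictMonoOn h (Set.Ici 0) ∧ ContinuousOn h (Set.Ici 0) ∧ h 0 = 0 ∧
  Tendsto (fun ε => h ε / ε) (nhdsWithin 0 (Set.Ioi 0)) (nhds 0) ∧
  (∀ a b : ℝ, 0 ≤ a → 0 ≤ b → h a + h b ≤ h (a + b)) ∧
  Tendsto h atTop atTop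

/-- `Γ_{ε,δ}(ν,η) ≠ ∅`: existence of a countable mass-transport decomposition. -/
def GammaDecomp (μ : Measure X) (ε δ : ℝ) (ν η : Measure X) : Prop :=
  ∃ νi ηi : ℕ → Measure X,
    (∀ i, νi i ∈ MM μ) ∧ (∀ i, ηi i ∈ MM μ) ∧
    ν = Measure.sum νi ∧ η = Measure.sum ηi ∧
    (∃ S : ℝ, HasSum (fun i => |mass (νi i) - mass (ηi i)|) S ∧ S ≤ δ) ∧
    (∀ i, Metric.diam (msupp (νi i) ∪ msupp (ηi i)) ≤ ε)

/-- The mass transport metric `d_𝓜`. -/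
noncomputable def dM (h : ℝ → ℝ) (μ : Measure X) (ν η : Measure X) : ℝ :=
  sInf {ε : ℝ | 0 < ε ∧ GammaDecomp μ ε (h ε) ν η}

/-- A rectifiable curve in `𝓜` subparametrized by arc-length: a `1`-Lipschitz map
`[0,b] → (𝓜, d_𝓜)`. -/
def IsCurveM (h : ℝ → ℝ) (μ : Measure X) (b : ℝ) (γ : ℝ → Measure X) : Prop :=
  0 ≤ b ∧ (∀ t ∈ Icc (0:ℝ) b, γ t ∈ MM μ) ∧
  ∀ s ∈ Icc (0:ℝ) b, ∀ t ∈ Icc (0:ℝ) b, dM h μ (γ s) (γ t) ≤ |s - t|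

/-- A rectifiable curve in `𝓧 = 𝓜 \ {0}` subparametrized by arc-length. -/
def IsCurveX (h : ℝ → ℝ) (μ : Measure X) (b : ℝ) (γ : ℝ → Measure X) : Prop :=
  IsCurveM h μ b γ ∧ ∀ t ∈ Icc (0:ℝ) b, γ t ≠ 0

/-- The mean value functional `F_f(η) = (1/‖η‖) ∫ f dη`. -/
noncomputable def FfM (f : X → ℝ) (η : Measure X) : ℝ := (∫ x, f x ∂η) / mass η

/-- `r_F^ε(η)`. -/
noncomputable def rGradE (h : ℝ → ℝ) (μ : Measure X) (F : Measure X → ℝ) (ε : ℝ)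
    (η : Measure X) : ℝ≥0∞ :=
  sSup {r : ℝ≥0∞ | ∃ (b : ℝ) (γ : ℝ → Measure X) (s : ℝ),
    IsCurveX h μ b γ ∧ γ 0 = η ∧ 0 < s ∧ s < ε ∧ s < b ∧
    r = ENNReal.ofReal (|F (γ s) - F η| / s)}

/-- The upper gradient `r_F(η) = lim_{ε→0} r_F^ε(η)`. -/
noncomputable def rGrad (h : ℝ → ℝ) (μ : Measure X) (F : Measure X → ℝ)
    (η : Measure X) : ℝ≥0∞ :=
  ⨅ (ε : ℝ) (_ : 0 < ε), rGradE h μ F ε η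

/-- Upper semicontinuous regularization along curves of `g : 𝓧 → [0,∞]`. -/
noncomputable def breveG (h : ℝ → ℝ) (μ : Measure X) (g : Measure X → ℝ≥0∞)
    (η : Measure X) : ℝ≥0∞ :=
  ⨅ (s : ℝ) (_ : 0 < s), sSup {r : ℝ≥0∞ | ∃ (b : ℝ) (γ : ℝ → Measure X) (t : ℝ),
    IsCurveX h μ b γ ∧ γ 0 = η ∧ 0 ≤ t ∧ t < s ∧ t ≤ b ∧ r = g (γ t)}

/-- `sup { Σᵢ G(ηᵢ)^p ‖ηᵢ‖ }` over finite disjointly supported families in `𝓧`. -/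
noncomputable def LpPow (μ : Measure X) (p : ℝ) (G : Measure X → ℝ≥0∞) : ℝ≥0∞ :=
  sSup {r : ℝ≥0∞ | ∃ (k : ℕ) (η : Fin k → Measure X),
    (∀ i, η i ∈ MM μ ∧ η i ≠ 0) ∧
    (∀ i j, i ≠ j → Disjoint (msupp (η i)) (msupp (η j))) ∧
    r = ∑ i, (G (η i)) ^ p * (η i) Set.univ}

/-- The `𝓛^p(𝓧)` norm of `F : 𝓧 → ℝ`. -/
noncomputable def LpNorm (μ : Measure X) (p : ℝ) (F : Measure X → ℝ) : ℝ≥0∞ :=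
  (LpPow μ p (fun η => ENNReal.ofReal |F η|)) ^ (1 / p)

/-- The `𝓛^p(𝓧)` norm for an extended exponent `p ∈ [1,∞]`. -/
noncomputable def LpNormE (μ : Measure X) (p : ℝ≥0∞) (F : Measure X → ℝ) : ℝ≥0∞ :=
  if p = ∞ then ⨆ (η : Measure X) (_ : η ∈ MM μ ∧ η ≠ 0), ENNReal.ofReal |F η|
  else LpNorm μ p.toReal F



lemma holder_sum {k : ℕ} (a b m : Fin k → ℝ≥0∞) {p q : ℝ} (hpq : p.HolderConjugate q) :
    ∑ i, a i * b i * m i ≤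
      (∑ i, a i ^ p * m i) ^ (1/p) * (∑ i, b i ^ q * m i) ^ (1/q) := by
  have h := ENNReal.inner_le_Lp_mul_Lq Finset.univ (fun i => a i * m i ^ (1/p))
      (fun i => b i * m i ^ (1/q)) hpq
  have e1 : ∀ i : Fin k, (a i * m i ^ (1/p)) * (b i * m i ^ (1/q)) = a i * b i * m i := by
    intro i
    have hm : m i ^ (1/p) * m i ^ (1/q) = m i := by
      rw [← ENNReal.rpow_add_of_nonneg _ _ hpq.one_div_pos.le hpq.symm.one_div_pos.le]
      rw [one_div, one_div, hpq.inv_add_inv_eq_one, ENNReal.rpow_one]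
    calc (a i * m i ^ (1/p)) * (b i * m i ^ (1/q))
        = a i * b i * (m i ^ (1/p) * m i ^ (1/q)) := by ring
      _ = a i * b i * m i := by rw [hm]
  have e2 : ∀ i : Fin k, (a i * m i ^ (1/p)) ^ p = a i ^ p * m i := by
    intro i
    rw [ENNReal.mul_rpow_of_nonneg _ _ hpq.nonneg, ← ENNReal.rpow_mul,
      one_div_mul_cancel hpq.ne_zero, ENNReal.rpow_one]
  have e3 : ∀ i : Fin k, (b i * m i ^ (1/q)) ^ q = b i ^ q * m i := by
    intro i
    rw [ENNReal.mul_rpow_of_nonneg _ _ hpq.symm.nonneg, ← ENNReal.rpow_mul,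
      one_div_mul_cancel hpq.symm.ne_zero, ENNReal.rpow_one]
  simpa only [e1, e2, e3] using h

lemma LpNormE_one {X : Type*} [MetricSpace X] [MeasurableSpace X] (μ : Measure X)
    (H : Measure X → ℝ) :
    LpNormE μ 1 H = LpPow μ 1 (fun η => ENNReal.ofReal |H η|) := by
  rw [LpNormE, if_neg ENNReal.one_ne_top, ENNReal.toReal_one, LpNorm]
  norm_num


/-- Hölder's inequality for `𝓛^p(𝓧)`:
`‖FG‖_{𝓛¹} ≤ ‖F‖_{𝓛^p} ‖G‖_{𝓛^q}` for conjugate exponents `1 ≤ p,q ≤ ∞`. -/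
theorem stmt10 {X : Type*} [MetricSpace X] [MeasurableSpace X] [BorelSpace X]
    [LocallyCompactSpace X] [TopologicalSpace.SeparableSpace X]
    (μ : Measure X) [μ.Regular]
    (hμ : ∀ (x : X) (r : ℝ), 0 < r → 0 < μ (Metric.ball x r) ∧ μ (Metric.ball x r) < ⊤)
    (p q : ℝ≥0∞) (hp : 1 ≤ p) (hq : 1 ≤ q) (hpq : p⁻¹ + q⁻¹ = 1)
    (F G : Measure X → ℝ) :
    LpNormE μ 1 (fun η => F η * G η) ≤ LpNormE μ p F * LpNormE μ q G := by
  classical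
  rw [LpNormE_one]
  -- first deal with the infinite-exponent cases
  rcases eq_or_ne p ⊤ with hp_top | hp_top
  · -- p = ∞, hence q = 1
    subst hp_top
    have hq1 : q = 1 := by
      have : q⁻¹ = 1 := by simpa using hpq
      simpa using congrArg (·⁻¹) this
    subst hq1
    rw [LpNormE_one]
    set S : ℝ≥0∞ := ⨆ (η : Measure X) (_ : η ∈ MM μ ∧ η ≠ 0), ENNReal.ofReal |F η| with hS
    have hRHS : LpNormE μ ⊤ F = S := by rw [LpNormE, if_pos rfl]
    rw [hRHS, LpPow]
    refine sSup_le ?_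
    rintro r ⟨k, η, h1, h2, rfl⟩
    calc ∑ i, (ENNReal.ofReal |F (η i) * G (η i)|) ^ (1:ℝ) * (η i) Set.univ
        = ∑ i, ENNReal.ofReal |F (η i)| * (ENNReal.ofReal |G (η i)| * (η i) Set.univ) := by
          simp only [ENNReal.rpow_one, abs_mul, ENNReal.ofReal_mul (abs_nonneg _), mul_assoc]
      _ ≤ ∑ i, S * (ENNReal.ofReal |G (η i)| * (η i) Set.univ) := by
          refine Finset.sum_le_sum fun i _ => mul_le_mul_left ?_ _
          exact le_iSup₂ (f := fun η _ => ENNReal.ofReal |F η|) (η i) (h1 i)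
      _ = S * ∑ i, ENNReal.ofReal |G (η i)| * (η i) Set.univ := by rw [Finset.mul_sum]
      _ ≤ S * LpPow μ 1 (fun η => ENNReal.ofReal |G η|) := by
          refine mul_le_mul_right (le_sSup ?_) _
          exact ⟨k, η, h1, h2, by simp [ENNReal.rpow_one]⟩
  rcases eq_or_ne q ⊤ with hq_top | hq_top
  · -- q = ∞, hence p = 1
    subst hq_top
    have hp1 : p = 1 := by
      have : p⁻¹ = 1 := by simpa using hpq
      simpa using congrArg (·⁻¹) this
    subst hp1
    rw [LpNormE_one]
    set S : ℝ≥0∞ := ⨆ (η : Measure X) (_ : η ∈ MM μ ∧ η ≠ 0), ENNReal.ofReal |G η| with hS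
    have hRHS : LpNormE μ ⊤ G = S := by rw [LpNormE, if_pos rfl]
    rw [hRHS, LpPow]
    refine sSup_le ?_
    rintro r ⟨k, η, h1, h2, rfl⟩
    calc ∑ i, (ENNReal.ofReal |F (η i) * G (η i)|) ^ (1:ℝ) * (η i) Set.univ
        = ∑ i, (ENNReal.ofReal |F (η i)| * (η i) Set.univ) * ENNReal.ofReal |G (η i)| := by
          refine Finset.sum_congr rfl fun i _ => ?_
          rw [ENNReal.rpow_one, abs_mul, ENNReal.ofReal_mul (abs_nonneg _)]
          ring
      _ ≤ ∑ i, (ENNReal.ofReal |F (η i)| * (η i) Set.univ) * S := by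
          refine Finset.sum_le_sum fun i _ => mul_le_mul_right ?_ _
          exact le_iSup₂ (f := fun η _ => ENNReal.ofReal |G η|) (η i) (h1 i)
      _ = (∑ i, ENNReal.ofReal |F (η i)| * (η i) Set.univ) * S := by rw [Finset.sum_mul]
      _ ≤ LpPow μ 1 (fun η => ENNReal.ofReal |F η|) * S := by
          refine mul_le_mul_left (le_sSup ?_) _
          exact ⟨k, η, h1, h2, by simp [ENNReal.rpow_one]⟩
  -- both p and q finite, hence 1 < p, q < ∞ and the exponents are conjugate reals
  have hp0 : p ≠ 0 := by intro h; rw [h] at hp; exact absurd hp (by simp)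
  have hq0 : q ≠ 0 := by intro h; rw [h] at hq; exact absurd hq (by simp)
  have hp_ne1 : p ≠ 1 := by
    intro h
    rw [h] at hpq
    simp only [inv_one] at hpq
    have : q⁻¹ = 0 :=
      (ENNReal.add_right_inj ENNReal.one_ne_top).mp (by simpa using hpq)
    exact hq_top (by simpa using this)
  have hq_ne1 : q ≠ 1 := by
    intro h
    rw [h] at hpq
    simp only [inv_one] at hpq
    have : p⁻¹ = 0 :=
      (ENNReal.add_right_inj ENNReal.one_ne_top).mp (by rw [add_comm] at hpq; simpa using hpq)
    exact hp_top (by simpa using this)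
  have hpq' : p.toReal.HolderConjugate q.toReal := by
    have hlt : 1 < p.toReal := by
      rw [← ENNReal.toReal_one]
      exact (ENNReal.toReal_lt_toReal ENNReal.one_ne_top hp_top).mpr
        (lt_of_le_of_ne hp (Ne.symm hp_ne1))
    have heq : p.toReal⁻¹ + q.toReal⁻¹ = 1 := by
      have h1 : (p⁻¹ + q⁻¹).toReal = (1:ℝ≥0∞).toReal := congrArg ENNReal.toReal hpq
      rw [ENNReal.toReal_add (by simp [ENNReal.inv_ne_top, hp0]) (by simp [ENNReal.inv_ne_top, hq0]),
        ENNReal.toReal_inv, ENNReal.toReal_inv, ENNReal.toReal_one] at h1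
      exact h1
    exact ⟨by rw [heq, inv_one], by linarith, ENNReal.toReal_pos hq0 hq_top⟩
  rw [LpNormE, if_neg hp_top, LpNormE, if_neg hq_top, LpNorm, LpNorm, LpPow]
  refine sSup_le ?_
  rintro r ⟨k, η, h1, h2, rfl⟩
  calc ∑ i, (ENNReal.ofReal |F (η i) * G (η i)|) ^ (1:ℝ) * (η i) Set.univ
      = ∑ i, ENNReal.ofReal |F (η i)| * ENNReal.ofReal |G (η i)| * (η i) Set.univ := by
        simp only [ENNReal.rpow_one, abs_mul, ENNReal.ofReal_mul (abs_nonneg _)]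
    _ ≤ (∑ i, (ENNReal.ofReal |F (η i)|) ^ p.toReal * (η i) Set.univ) ^ (1/p.toReal) *
        (∑ i, (ENNReal.ofReal |G (η i)|) ^ q.toReal * (η i) Set.univ) ^ (1/q.toReal) :=
        holder_sum _ _ _ hpq'
    _ ≤ (LpPow μ p.toReal (fun η => ENNReal.ofReal |F η|)) ^ (1/p.toReal) *
        (LpPow μ q.toReal (fun η => ENNReal.ofReal |G η|)) ^ (1/q.toReal) := by
        refine mul_le_mul' ?_ ?_
        · exact ENNReal.rpow_le_rpow (le_sSup ⟨k, η, h1, h2, rfl⟩) hpq'.one_div_pos.le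
        · exact ENNReal.rpow_le_rpow (le_sSup ⟨k, η, h1, h2, rfl⟩) hpq'.symm.one_div_pos.le
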